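/- For K_x, K_y, K_z > 0 satisfying e^{-2(K_x+K_y)} + e^{-2(K_y+K_z)} + e^{-2(K_x+K_z)} = 1, it holds that e^{-2(K_y+K_z)} = (tanh K_x + tanh K_y · tanh K_z)/(1 + tanh K_x · tanh K_y · tanh K_z), and similarly under cyclic permutations of (x,y,z). That is, the constraint surface is fixed under the generalized Kramers–Wannier duality map. -/

import Mathlib

lemma tanh_eq_aux (K : ℝ) :
    Real.tanh K = (1 - Real.exp (-2*K)) / (1 + Real.exp (-2*K)) := by
  rw [Real.tanh_eq_sinh_div_cosh, Real.sinh_eq, Real.cosh_eq]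
  have h1 : Real.exp (-2*K) = Real.exp (-K) * Real.exp (-K) := by
    rw [← Real.exp_add]; ring_nf
  have h2 : Real.exp K * Real.exp (-K) = 1 := by
    rw [← Real.exp_add]; simp
  have hp1 : 0 < Real.exp K + Real.exp (-K) := by positivity
  have hp2 : 0 < 1 + Real.exp (-2*K) := by positivity
  have h1' : Real.exp (-(2*K)) = Real.exp (-K) * Real.exp (-K) := by
    rw [← Real.exp_add]; ring_nf
  field_simp
  linear_combination (norm := ring_nf) 2*Real.exp K * h1' + 2*Real.exp (-K) * h2

lemma key_aux (a b c : ℝ) (ha : 0 < a) (hb : 0 < b) (hc : 0 < c)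
    (h : a*b + b*c + a*c = 1) :
    b*c = ((1-a)/(1+a) + (1-b)/(1+b) * ((1-c)/(1+c)))
      / (1 + (1-a)/(1+a) * ((1-b)/(1+b)) * ((1-c)/(1+c))) := by
  have h1 : (0:ℝ) < 1 + a := by linarith
  have h2 : (0:ℝ) < 1 + b := by linarith
  have h3 : (0:ℝ) < 1 + c := by linarith
  have hd : 1 + (1-a)/(1+a) * ((1-b)/(1+b)) * ((1-c)/(1+c))
      = ((1+a)*(1+b)*(1+c) + (1-a)*(1-b)*(1-c)) / ((1+a)*(1+b)*(1+c)) := by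
    field_simp
  have hd2 : (1+a)*(1+b)*(1+c) + (1-a)*(1-b)*(1-c) = 4 := by nlinarith
  rw [hd, hd2]
  field_simp [h1.ne', h2.ne', h3.ne']
  linear_combination 2*h

theorem kw_selfdual_surface (Kx Ky Kz : ℝ) (hx : 0 < Kx) (hy : 0 < Ky) (hz : 0 < Kz)
    (h : Real.exp (-2*(Kx+Ky)) + Real.exp (-2*(Ky+Kz)) + Real.exp (-2*(Kx+Kz)) = 1) :
    Real.exp (-2*(Ky+Kz))
        = (Real.tanh Kx + Real.tanh Ky * Real.tanh Kz)
          / (1 + Real.tanh Kx * Real.tanh Ky * Real.tanh Kz) ∧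
    Real.exp (-2*(Kx+Kz))
        = (Real.tanh Ky + Real.tanh Kz * Real.tanh Kx)
          / (1 + Real.tanh Kx * Real.tanh Ky * Real.tanh Kz) ∧
    Real.exp (-2*(Kx+Ky))
        = (Real.tanh Kz + Real.tanh Kx * Real.tanh Ky)
          / (1 + Real.tanh Kx * Real.tanh Ky * Real.tanh Kz) := by
  set a := Real.exp (-2*Kx) with hadef
  set b := Real.exp (-2*Ky) with hbdef
  set c := Real.exp (-2*Kz) with hcdef
  have ha : 0 < a := Real.exp_pos _
  have hb : 0 < b := Real.exp_pos _
  have hc : 0 < c := Real.exp_pos _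
  have exy : Real.exp (-2*(Kx+Ky)) = a * b := by rw [hadef, hbdef, ← Real.exp_add]; ring_nf
  have eyz : Real.exp (-2*(Ky+Kz)) = b * c := by rw [hbdef, hcdef, ← Real.exp_add]; ring_nf
  have exz : Real.exp (-2*(Kx+Kz)) = a * c := by rw [hadef, hcdef, ← Real.exp_add]; ring_nf
  rw [exy, eyz, exz] at h ⊢
  rw [tanh_eq_aux Kx, tanh_eq_aux Ky, tanh_eq_aux Kz]
  rw [← hadef, ← hbdef, ← hcdef]
  refine ⟨?_, ?_, ?_⟩
  · exact key_aux a b c ha hb hc (by linarith)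
  · have := key_aux b a c hb ha hc (by linarith)
    rw [this]; ring_nf
  · have := key_aux c a b hc ha hb (by linarith)
    rw [this]; ring_nf
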